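/- Suppose n ≥ 3, A is an arm sequence, λ and μ are A-regular partitions, and i ∈ ℤ/nℤ. Then ẽ_i λ = μ if and only if f̃_i μ = λ. -/

import Mathlib

/-!  Partitions, arm sequences and the crystal operators `ẽ_i`, `f̃_i` of the paper
"Partition models for the crystal of the basic `U_q(ŝl_n)`-module".

A partition is modelled as a function `l : ℕ → ℕ` listing the parts, with rows indexed
from `0`; the Young diagram consists of the nodes `(a, c)` (row `a`, column `c`, both
`0`-indexed) with `c < l a`.  The node `(a, c)` here corresponds to the node
`(a + 1, c + 1)` in the (1-indexed) conventions of the paper; in particular its residue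
is `c - a (mod n)`, its arm length is `l a - c - 1`, and its hook length is
`l a - c + l' c - a - 1`, where `l'` is the conjugate partition. -/

attribute [local instance] Classical.propDecidable

namespace ArmCrystal

/-- `l` is a partition: weakly decreasing with some part equal to `0`. -/
def IsPartition (l : ℕ → ℕ) : Prop := (∀ a, l (a + 1) ≤ l a) ∧ ∃ N, l N = 0

/-- The conjugate partition: `conj l c` is the number of rows `a` with `l a > c`,
i.e. the number of nodes in column `c`. -/
noncomputable def conj (l : ℕ → ℕ) (c : ℕ) : ℕ := sInf {a | l a ≤ c}

/-- `A` is an arm sequence for `n`: `t - 1 ≤ A t ≤ (n-1)t` for `t ≥ 1`, and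
`A (t + u) ∈ {A t + A u, A t + A u + 1}`.  (The value `A 0` is irrelevant; in the
definition of the order on nodes it is read as `0`, via `Aext`.) -/
def IsArmSeq (n : ℕ) (A : ℕ → ℤ) : Prop :=
  (∀ t : ℕ, 1 ≤ t → (t : ℤ) - 1 ≤ A t ∧ A t ≤ ((n : ℤ) - 1) * t) ∧
  (∀ t u : ℕ, 1 ≤ t → 1 ≤ u → A (t + u) = A t + A u ∨ A (t + u) = A t + A u + 1)

/-- `A` extended by `A 0 = 0`. -/
def Aext (A : ℕ → ℤ) (t : ℕ) : ℤ := if t = 0 then 0 else A t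

/-- The `(a, c)`-hook of `l` is illegal with parameter `t ≥ 1`: `(a, c)` is a node of
`l` whose hook length is `n * t` and whose arm length is `A t`. -/
def IllegalHook (n : ℕ) (A : ℕ → ℤ) (l : ℕ → ℕ) (a c t : ℕ) : Prop :=
  1 ≤ t ∧ c < l a ∧
  ((l a : ℤ) + conj l c = (n : ℤ) * t + a + c + 1) ∧
  ((l a : ℤ) = A t + c + 1)

/-- `l` is `A`-regular: it has no illegal hook. -/
def ARegular (n : ℕ) (A : ℕ → ℤ) (l : ℕ → ℕ) : Prop :=
  ¬ ∃ a c t, IllegalHook n A l a c t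

/-- `(a, c)` is a removable node of `l`. -/
def Removable (l : ℕ → ℕ) (a c : ℕ) : Prop := l a = c + 1 ∧ l (a + 1) ≤ c

/-- `(a, c)` is an addable node of `l`. -/
def Addable (l : ℕ → ℕ) (a c : ℕ) : Prop := l a = c ∧ (a = 0 ∨ c < l (a - 1))

/-- The residue of the node `(a, c)` (0-indexed), namely `c - a ∈ ℤ/nℤ`. -/
def res (n : ℕ) (x : ℕ × ℕ) : ZMod n := (x.2 : ZMod n) - (x.1 : ZMod n)

/-- The total order `≻` determined by the arm sequence `A` on the nodes of a fixed
residue: for distinct same-residue nodes `x = (a, c)` and `y = (b, d)`, if the axial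
distance `b - a + c - d` equals `n t` with `t ≥ 0` then `x ≻ y` iff `c - d > A t`, while
if `a - b + d - c = n t` with `t ≥ 0` then `x ≻ y` iff `d - c ≤ A t` (reading `A 0 = 0`). -/
def NodeGt (n : ℕ) (A : ℕ → ℤ) (x y : ℕ × ℕ) : Prop :=
  (∃ t : ℕ, (y.1 : ℤ) - x.1 + x.2 - y.2 = (n : ℤ) * t ∧ Aext A t < (x.2 : ℤ) - y.2) ∨
  (∃ t : ℕ, (x.1 : ℤ) - y.1 + y.2 - x.2 = (n : ℤ) * t ∧ (y.2 : ℤ) - x.2 ≤ Aext A t ∧ x ≠ y)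

/-- The (finite) set of addable and removable `i`-nodes of `l`. -/
noncomputable def ARset (n : ℕ) (l : ℕ → ℕ) (i : ZMod n) : Finset (ℕ × ℕ) :=
  ((Finset.range (conj l 0 + 1)) ×ˢ (Finset.range (l 0 + 1))).filter
    (fun x => res n x = i ∧ (Addable l x.1 x.2 ∨ Removable l x.1 x.2))

/-- The sign of a node in the ±-sequence: `+1` if addable, `-1` if removable. -/
noncomputable def sgnNode (l : ℕ → ℕ) (x : ℕ × ℕ) : ℤ :=
  if Addable l x.1 x.2 then 1 else if Removable l x.1 x.2 then -1 else 0

/-- Minus the partial sum of signs over the addable/removable `i`-nodes `y ⪰ x`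
(the prefix of the ±-sequence ending at `x`, the nodes being listed in decreasing
`≻`-order). -/
noncomputable def Gnode (n : ℕ) (A : ℕ → ℤ) (l : ℕ → ℕ) (i : ZMod n) (x : ℕ × ℕ) : ℤ :=
  -(∑ y ∈ (ARset n l i).filter (fun y => y = x ∨ NodeGt n A y x), sgnNode l y)

/-- The sum of signs over the addable/removable `i`-nodes `y ⪯ x` (the suffix of the
±-sequence starting at `x`). -/
noncomputable def Hnode (n : ℕ) (A : ℕ → ℤ) (l : ℕ → ℕ) (i : ZMod n) (x : ℕ × ℕ) : ℤ :=
  ∑ y ∈ (ARset n l i).filter (fun y => y = x ∨ NodeGt n A x y), sgnNode l y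

/-- `ε_i(λ)`: the maximum of `0` and the partial sums `Gnode`. -/
noncomputable def epsP (n : ℕ) (A : ℕ → ℤ) (l : ℕ → ℕ) (i : ZMod n) : ℤ :=
  (ARset n l i).fold max 0 (Gnode n A l i)

/-- `φ_i(λ)`: the maximum of `0` and the partial sums `Hnode`. -/
noncomputable def phiP (n : ℕ) (A : ℕ → ℤ) (l : ℕ → ℕ) (i : ZMod n) : ℤ :=
  (ARset n l i).fold max 0 (Hnode n A l i)

/-- The `i`-good node of `l`: the node in the good position of the ±-sequence, i.e. the
`≻`-greatest addable/removable `i`-node achieving `Gnode = ε_i > 0` (or `none`). -/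
noncomputable def goodNode (n : ℕ) (A : ℕ → ℤ) (l : ℕ → ℕ) (i : ZMod n) : Option (ℕ × ℕ) :=
  if hx : ∃ x ∈ ARset n l i, 0 < epsP n A l i ∧ Gnode n A l i x = epsP n A l i ∧
      ∀ y ∈ ARset n l i, NodeGt n A y x → Gnode n A l i y ≠ epsP n A l i
  then some hx.choose else none

/-- The `i`-cogood node of `l`: the node in the cogood position of the ±-sequence, i.e.
the `≻`-least addable/removable `i`-node achieving `Hnode = φ_i > 0` (or `none`). -/
noncomputable def cogoodNode (n : ℕ) (A : ℕ → ℤ) (l : ℕ → ℕ) (i : ZMod n) :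
    Option (ℕ × ℕ) :=
  if hx : ∃ x ∈ ARset n l i, 0 < phiP n A l i ∧ Hnode n A l i x = phiP n A l i ∧
      ∀ y ∈ ARset n l i, NodeGt n A x y → Hnode n A l i y ≠ phiP n A l i
  then some hx.choose else none

/-- The crystal operator `ẽ_i`: remove the `i`-good node (shorten its row by one), or
`none` (the ghost element `0`) if there is none. -/
noncomputable def et (n : ℕ) (A : ℕ → ℤ) (l : ℕ → ℕ) (i : ZMod n) : Option (ℕ → ℕ) :=
  (goodNode n A l i).map fun x => Function.update l x.1 (l x.1 - 1)

/-- The crystal operator `f̃_i`: add the `i`-cogood node (lengthen its row by one), or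
`none` (the ghost element `0`) if there is none. -/
noncomputable def ft (n : ℕ) (A : ℕ → ℤ) (l : ℕ → ℕ) (i : ZMod n) : Option (ℕ → ℕ) :=
  (cogoodNode n A l i).map fun x => Function.update l x.1 (l x.1 + 1)


section Aux
variable {n : ℕ} {A : ℕ → ℤ}

lemma le_aext_add (hA : IsArmSeq n A) (t u : ℕ) :
    Aext A t + Aext A u ≤ Aext A (t + u) := by
  rcases Nat.eq_zero_or_pos t with ht | ht
  · simp [ht, Aext]
  rcases Nat.eq_zero_or_pos u with hu | hu
  · simp [hu, Aext]
  have h := hA.2 t u ht hu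
  have htu : t + u ≠ 0 := by omega
  simp only [Aext, if_neg (by omega : t ≠ 0), if_neg (by omega : u ≠ 0), if_neg htu]
  rcases h with h | h <;> omega

lemma aext_add_le (hA : IsArmSeq n A) (t u : ℕ) :
    Aext A (t + u) ≤ Aext A t + Aext A u + 1 := by
  rcases Nat.eq_zero_or_pos t with ht | ht
  · simp [ht, Aext]
  rcases Nat.eq_zero_or_pos u with hu | hu
  · simp [hu, Aext]
  have h := hA.2 t u ht hu
  have htu : t + u ≠ 0 := by omega
  simp only [Aext, if_neg (by omega : t ≠ 0), if_neg (by omega : u ≠ 0), if_neg htu]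
  rcases h with h | h <;> omega

lemma nodeGt_irrefl (hn : 0 < n) (x : ℕ × ℕ) : ¬ NodeGt n A x x := by
  rintro (⟨t, ht, hlt⟩ | ⟨t, ht, hle, hne⟩)
  · have : (n : ℤ) * t = 0 := by omega
    have ht0 : t = 0 := by
      rcases Nat.eq_zero_or_pos t with h | h
      · exact h
      · exfalso; nlinarith [Int.natCast_pos.2 hn, Int.natCast_pos.2 h]
    simp [ht0, Aext] at hlt
  · exact hne rfl

lemma nodeGt_trans (hn : 0 < n) (hA : IsArmSeq n A) {x y z : ℕ × ℕ}
    (hxy : NodeGt n A x y) (hyz : NodeGt n A y z) : NodeGt n A x z := by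
  have hnz : (0:ℤ) < n := by exact_mod_cast hn
  rcases hxy with ⟨t, ht, hlt⟩ | ⟨t, ht, hle, hne⟩ <;>
    rcases hyz with ⟨u, hu, hlt'⟩ | ⟨u, hu, hle', hne'⟩
  · -- case (1,1)
    refine Or.inl ⟨t + u, ?_, ?_⟩
    · push_cast; linarith
    · have := aext_add_le hA t u; linarith
  · -- case (1,2): compare t u
    rcases lt_trichotomy u t with h | h | h
    · refine Or.inl ⟨t - u, ?_, ?_⟩
      · have : ((t - u : ℕ) : ℤ) = (t : ℤ) - u := by
          omega
        rw [this]; push_cast; linarith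
      · have h1 := le_aext_add hA (t - u) u
        have h2 : t - u + u = t := by omega
        rw [h2] at h1; linarith
    · subst h
      refine Or.inl ⟨0, ?_, ?_⟩
      · push_cast; linarith
      · simp [Aext]; linarith
    · refine Or.inr ⟨u - t, ?_, ?_, ?_⟩
      · have : ((u - t : ℕ) : ℤ) = (u : ℤ) - t := by omega
        rw [this]; push_cast; linarith
      · have h1 := aext_add_le hA (u - t) t
        have h2 : u - t + t = u := by omega
        rw [h2] at h1; linarith
      · intro hxz; subst hxz
        have : (x.1 : ℤ) - y.1 + y.2 - x.2 + ((y.1:ℤ) - x.1 + x.2 - y.2) = 0 := by ring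
        have hut : (0:ℤ) < (n:ℤ) * ((u:ℤ) - t) := by
          have h2 : (0:ℤ) < (u:ℤ) - t := by
            have : (t:ℤ) < (u:ℤ) := by exact_mod_cast h
            linarith
          positivity
        -- x = z gives n*u = n*t contradiction? derive
        nlinarith [ht, hu]
  · -- case (2,1)
    rcases lt_trichotomy t u with h | h | h
    · refine Or.inl ⟨u - t, ?_, ?_⟩
      · have : ((u - t : ℕ) : ℤ) = (u : ℤ) - t := by omega
        rw [this]; push_cast; linarith
      · have h1 := le_aext_add hA (u - t) t
        have h2 : u - t + t = u := by omega
        rw [h2] at h1; linarith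
    · subst h
      refine Or.inl ⟨0, ?_, ?_⟩
      · push_cast; linarith
      · simp [Aext]; linarith
    · refine Or.inr ⟨t - u, ?_, ?_, ?_⟩
      · have : ((t - u : ℕ) : ℤ) = (t : ℤ) - u := by omega
        rw [this]; push_cast; linarith
      · have h1 := aext_add_le hA (t - u) u
        have h2 : t - u + u = t := by omega
        rw [h2] at h1; linarith
      · intro hxz; subst hxz
        have hut : (0:ℤ) < (n:ℤ) * ((t:ℤ) - u) := by
          have : (0:ℤ) < (t:ℤ) - u := by
            have := h; omega
          positivity
        nlinarith [ht, hu]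
  · -- case (2,2)
    refine Or.inr ⟨t + u, ?_, ?_, ?_⟩
    · push_cast; linarith
    · have := le_aext_add hA t u; linarith
    · intro hxz; subst hxz
      have ht0 : t = 0 ∧ u = 0 := by
        constructor <;> by_contra hc <;>
        · have h1 : (1:ℤ) ≤ (t:ℤ) + u := by
            have : 1 ≤ t + u := by omega
            exact_mod_cast this
          nlinarith [ht, hu]
      obtain ⟨ht0, hu0⟩ := ht0
      subst ht0; subst hu0
      simp [Aext] at hle hle'
      apply hne
      have h2 : x.2 = y.2 := by omega
      have h1 : x.1 = y.1 := by
        simp at ht; omega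
      exact Prod.ext h1 h2

lemma nodeGt_asymm (hn : 0 < n) (hA : IsArmSeq n A) {x y : ℕ × ℕ}
    (h : NodeGt n A x y) : ¬ NodeGt n A y x :=
  fun h' => nodeGt_irrefl hn x (nodeGt_trans hn hA h h')

lemma res_dvd (hn : 0 < n) {x y : ℕ × ℕ} (h : res n x = res n y) :
    (n : ℤ) ∣ ((y.1 : ℤ) - x.1 + x.2 - y.2) := by
  haveI : NeZero n := ⟨hn.ne'⟩
  have : (((y.1 : ℤ) - x.1 + x.2 - y.2 : ℤ) : ZMod n) = 0 := by
    push_cast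
    unfold res at h
    linear_combination h
  exact (ZMod.intCast_zmod_eq_zero_iff_dvd _ n).1 this

lemma nodeGt_total_aux {x y : ℕ × ℕ} (t : ℕ)
    (heq : (y.1 : ℤ) - x.1 + x.2 - y.2 = (n : ℤ) * t) (hne : x ≠ y) :
    NodeGt n A x y ∨ NodeGt n A y x := by
  rcases lt_or_ge (Aext A t) ((x.2 : ℤ) - y.2) with h | h
  · exact Or.inl (Or.inl ⟨t, heq, h⟩)
  · exact Or.inr (Or.inr ⟨t, heq, h, hne.symm⟩)

lemma nodeGt_total (hn : 0 < n) {x y : ℕ × ℕ} (h : res n x = res n y) (hne : x ≠ y) :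
    NodeGt n A x y ∨ NodeGt n A y x := by
  obtain ⟨k, hk⟩ := res_dvd hn h
  rcases le_or_gt 0 k with hk0 | hk0
  · have : (y.1 : ℤ) - x.1 + x.2 - y.2 = (n : ℤ) * (k.toNat : ℕ) := by
      rw [hk]; congr 1; omega
    exact nodeGt_total_aux k.toNat this hne
  · have : (x.1 : ℤ) - y.1 + y.2 - x.2 = (n : ℤ) * ((-k).toNat : ℕ) := by
      have : ((-k).toNat : ℤ) = -k := by omega
      rw [this]; linarith
    exact (nodeGt_total_aux (-k).toNat this hne.symm).symm


lemma exists_min_rel {α : Type*} (R : α → α → Prop)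
    (htrans : ∀ {a b c}, R a b → R b c → R a c) (s : Finset α) :
    s.Nonempty → (∀ x ∈ s, ∀ y ∈ s, x ≠ y → R x y ∨ R y x) →
    ∃ z ∈ s, ∀ w ∈ s, w ≠ z → R w z := by
  classical
  induction s using Finset.induction_on with
  | empty => intro hs _; simp at hs
  | @insert a s' ha IH =>
    intro _ htot
    rcases s'.eq_empty_or_nonempty with h' | h'
    · subst h'
      refine ⟨a, Finset.mem_insert_self _ _, ?_⟩
      intro w hw hne
      rcases Finset.mem_insert.1 hw with rfl | hw
      · exact absurd rfl hne
      · simp at hw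
    · obtain ⟨z, hz, hzmin⟩ := IH h'
        (fun x hx y hy hne => htot x (Finset.mem_insert_of_mem hx) y
          (Finset.mem_insert_of_mem hy) hne)
      by_cases haz : a = z
      · exact absurd (haz ▸ hz) ha
      rcases htot a (Finset.mem_insert_self a s') z (Finset.mem_insert_of_mem hz) haz
        with hA | hB
      · refine ⟨z, Finset.mem_insert_of_mem hz, ?_⟩
        intro w hw hne
        rcases Finset.mem_insert.1 hw with rfl | hw
        · exact hA
        · exact hzmin w hw hne
      · refine ⟨a, Finset.mem_insert_self _ _, ?_⟩
        intro w hw hne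
        rcases Finset.mem_insert.1 hw with rfl | hw
        · exact absurd rfl hne
        · by_cases hwz : w = z
          · exact hwz ▸ hB
          · exact htrans (hzmin w hw hwz) hB

lemma exists_max_rel {α : Type*} (R : α → α → Prop)
    (htrans : ∀ {a b c}, R a b → R b c → R a c) (s : Finset α)
    (hs : s.Nonempty) (htot : ∀ x ∈ s, ∀ y ∈ s, x ≠ y → R x y ∨ R y x) :
    ∃ z ∈ s, ∀ w ∈ s, w ≠ z → R z w := by
  obtain ⟨z, hz, hmin⟩ := exists_min_rel (fun a b => R b a)
    (fun h1 h2 => htrans h2 h1) s hs (fun x hx y hy hne => (htot x hx y hy hne).symm)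
  exact ⟨z, hz, hmin⟩

lemma fold_max_le_of_mem {α : Type*} {T : Finset α} {f : α → ℤ} {x : α} (hx : x ∈ T) :
    f x ≤ T.fold max 0 f :=
  ((Finset.fold_max_le (T.fold max 0 f)).1 le_rfl).2 x hx

lemma fold_max_eq_of {α : Type*} {T : Finset α} {f : α → ℤ} {x : α} (hx : x ∈ T)
    (h0 : 0 ≤ f x) (hall : ∀ y ∈ T, f y ≤ f x) : T.fold max 0 f = f x :=
  le_antisymm ((Finset.fold_max_le (f x)).2 ⟨h0, hall⟩) (fold_max_le_of_mem hx)


end Aux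
section Sums
variable {n : ℕ} {A : ℕ → ℤ} {l : ℕ → ℕ} {i : ZMod n}

lemma res_of_mem_ARset {x : ℕ × ℕ} (hx : x ∈ ARset n l i) : res n x = i :=
  ((Finset.mem_filter.1 hx).2).1

lemma addrem_of_mem_ARset {x : ℕ × ℕ} (hx : x ∈ ARset n l i) :
    Addable l x.1 x.2 ∨ Removable l x.1 x.2 :=
  ((Finset.mem_filter.1 hx).2).2

lemma not_add_and_rem {a c : ℕ} (h1 : Addable l a c) (h2 : Removable l a c) : False := by
  unfold Addable Removable at *; omega

lemma sgn_of_addable {x : ℕ × ℕ} (h : Addable l x.1 x.2) : sgnNode l x = 1 := by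
  unfold sgnNode; rw [if_pos h]

lemma sgn_of_removable {x : ℕ × ℕ} (h : Removable l x.1 x.2) : sgnNode l x = -1 := by
  unfold sgnNode
  rw [if_neg (fun h' => not_add_and_rem h' h), if_pos h]

lemma sgn_cases {x : ℕ × ℕ} (hx : x ∈ ARset n l i) :
    sgnNode l x = 1 ∨ sgnNode l x = -1 := by
  rcases addrem_of_mem_ARset hx with h | h
  · exact Or.inl (sgn_of_addable h)
  · exact Or.inr (sgn_of_removable h)

lemma addable_of_sgn_one {x : ℕ × ℕ} (hx : x ∈ ARset n l i) (h : sgnNode l x = 1) :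
    Addable l x.1 x.2 := by
  by_contra hadd
  rcases addrem_of_mem_ARset hx with h' | h'
  · exact hadd h'
  · rw [sgn_of_removable h'] at h; omega

lemma removable_of_sgn_neg {x : ℕ × ℕ} (hx : x ∈ ARset n l i) (h : sgnNode l x = -1) :
    Removable l x.1 x.2 := by
  rcases addrem_of_mem_ARset hx with h' | h'
  · rw [sgn_of_addable h'] at h; omega
  · exact h'

lemma mem_total (hn : 0 < n) {x y : ℕ × ℕ} (hx : x ∈ ARset n l i) (hy : y ∈ ARset n l i)
    (hne : x ≠ y) : NodeGt n A x y ∨ NodeGt n A y x :=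
  nodeGt_total hn ((res_of_mem_ARset hx).trans (res_of_mem_ARset hy).symm) hne

/-- `Hnode = S + sgn + Gnode`. -/
lemma hnode_eq (hn : 0 < n) (hA : IsArmSeq n A) {x : ℕ × ℕ} (hx : x ∈ ARset n l i) :
    Hnode n A l i x = (∑ y ∈ ARset n l i, sgnNode l y) + sgnNode l x + Gnode n A l i x := by
  classical
  set T := ARset n l i with hT
  set P := T.filter (fun y => y = x ∨ NodeGt n A y x) with hP
  set Q := T.filter (fun y => y = x ∨ NodeGt n A x y) with hQ
  have hunion : P ∪ Q = T := by
    apply Finset.Subset.antisymm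
    · intro y hy
      rcases Finset.mem_union.1 hy with h | h
      exacts [(Finset.mem_filter.1 h).1, (Finset.mem_filter.1 h).1]
    · intro y hy
      by_cases hyx : y = x
      · exact Finset.mem_union.2 (Or.inl (Finset.mem_filter.2 ⟨hy, Or.inl hyx⟩))
      · rcases mem_total hn hy hx hyx with h | h
        · exact Finset.mem_union.2 (Or.inl (Finset.mem_filter.2 ⟨hy, Or.inr h⟩))
        · exact Finset.mem_union.2 (Or.inr (Finset.mem_filter.2 ⟨hy, Or.inr h⟩))
  have hinter : P ∩ Q = {x} := by
    apply Finset.Subset.antisymm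
    · intro y hy
      rw [Finset.mem_inter] at hy
      obtain ⟨h1, h2⟩ := hy
      rcases (Finset.mem_filter.1 h1).2 with h1' | h1'
      · simpa using h1'
      rcases (Finset.mem_filter.1 h2).2 with h2' | h2'
      · simpa using h2'
      · exact absurd h1' (nodeGt_asymm hn hA h2')
    · intro y hy
      rw [Finset.mem_singleton] at hy; subst hy
      exact Finset.mem_inter.2 ⟨Finset.mem_filter.2 ⟨hx, Or.inl rfl⟩,
        Finset.mem_filter.2 ⟨hx, Or.inl rfl⟩⟩
  have hsum : (∑ y ∈ P ∪ Q, sgnNode l y) + ∑ y ∈ P ∩ Q, sgnNode l y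
      = (∑ y ∈ P, sgnNode l y) + ∑ y ∈ Q, sgnNode l y := Finset.sum_union_inter
  rw [hunion, hinter, Finset.sum_singleton] at hsum
  unfold Hnode Gnode
  rw [← hT, ← hP, ← hQ]
  linarith

/-- At an element with no greater element, `Gnode = -sgn`. -/
lemma gnode_top (hn : 0 < n) {x : ℕ × ℕ} (hx : x ∈ ARset n l i)
    (h : ∀ y ∈ ARset n l i, ¬ NodeGt n A y x) : Gnode n A l i x = - sgnNode l x := by
  have : (ARset n l i).filter (fun y => y = x ∨ NodeGt n A y x) = {x} := by
    apply Finset.Subset.antisymm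
    · intro y hy
      rcases (Finset.mem_filter.1 hy).2 with h' | h'
      · simpa using h'
      · exact absurd h' (h y (Finset.mem_filter.1 hy).1)
    · intro y hy
      rw [Finset.mem_singleton] at hy; subst hy
      exact Finset.mem_filter.2 ⟨hx, Or.inl rfl⟩
  unfold Gnode; rw [this, Finset.sum_singleton]

/-- At an element with no smaller element, `Hnode = sgn`. -/
lemma hnode_bot (hn : 0 < n) {x : ℕ × ℕ} (hx : x ∈ ARset n l i)
    (h : ∀ y ∈ ARset n l i, ¬ NodeGt n A x y) : Hnode n A l i x = sgnNode l x := by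
  have : (ARset n l i).filter (fun y => y = x ∨ NodeGt n A x y) = {x} := by
    apply Finset.Subset.antisymm
    · intro y hy
      rcases (Finset.mem_filter.1 hy).2 with h' | h'
      · simpa using h'
      · exact absurd h' (h y (Finset.mem_filter.1 hy).1)
    · intro y hy
      rw [Finset.mem_singleton] at hy; subst hy
      exact Finset.mem_filter.2 ⟨hx, Or.inl rfl⟩
  unfold Hnode; rw [this, Finset.sum_singleton]

/-- At the minimum, `Gnode = -S`. -/
lemma gnode_bot (hn : 0 < n) {x : ℕ × ℕ} (hx : x ∈ ARset n l i)
    (h : ∀ y ∈ ARset n l i, ¬ NodeGt n A x y) :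
    Gnode n A l i x = -(∑ y ∈ ARset n l i, sgnNode l y) := by
  have : (ARset n l i).filter (fun y => y = x ∨ NodeGt n A y x) = ARset n l i := by
    apply Finset.filter_true_of_mem
    intro y hy
    by_cases hyx : y = x
    · exact Or.inl hyx
    · rcases mem_total hn hy hx hyx with h' | h'
      · exact Or.inr h'
      · exact absurd h' (h y hy)
  unfold Gnode; rw [this]

/-- At the maximum, `Hnode = S`. -/
lemma hnode_top (hn : 0 < n) {x : ℕ × ℕ} (hx : x ∈ ARset n l i)
    (h : ∀ y ∈ ARset n l i, ¬ NodeGt n A y x) :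
    Hnode n A l i x = ∑ y ∈ ARset n l i, sgnNode l y := by
  have : (ARset n l i).filter (fun y => y = x ∨ NodeGt n A x y) = ARset n l i := by
    apply Finset.filter_true_of_mem
    intro y hy
    by_cases hyx : y = x
    · exact Or.inl hyx
    · rcases mem_total hn hy hx hyx with h' | h'
      · exact absurd h' (h y hy)
      · exact Or.inr h'
  unfold Hnode; rw [this]

/-- Predecessor recursion for `Gnode`. -/
lemma gnode_pred (hn : 0 < n) (hA : IsArmSeq n A) {x : ℕ × ℕ} (hx : x ∈ ARset n l i)
    (h : ∃ y ∈ ARset n l i, NodeGt n A y x) :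
    ∃ z ∈ ARset n l i, NodeGt n A z x ∧
      Gnode n A l i x = Gnode n A l i z - sgnNode l x := by
  classical
  set T := ARset n l i with hT
  set U := T.filter (fun y => NodeGt n A y x) with hU
  have hUne : U.Nonempty := by
    obtain ⟨y, hy, hgt⟩ := h
    exact ⟨y, Finset.mem_filter.2 ⟨hy, hgt⟩⟩
  obtain ⟨z, hzU, hzmin⟩ := exists_min_rel (NodeGt n A) (nodeGt_trans hn hA) U hUne
    (fun a ha b hb hne => mem_total hn (Finset.mem_filter.1 ha).1 (Finset.mem_filter.1 hb).1 hne)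
  have hzT : z ∈ T := (Finset.mem_filter.1 hzU).1
  have hzx : NodeGt n A z x := (Finset.mem_filter.1 hzU).2
  refine ⟨z, hzT, hzx, ?_⟩
  have hPeq : T.filter (fun y => y = x ∨ NodeGt n A y x)
      = insert x (T.filter (fun y => y = z ∨ NodeGt n A y z)) := by
    apply Finset.Subset.antisymm
    · intro y hy
      obtain ⟨hyT, hy2⟩ := Finset.mem_filter.1 hy
      rcases hy2 with rfl | hy2
      · exact Finset.mem_insert_self _ _
      · apply Finset.mem_insert_of_mem
        refine Finset.mem_filter.2 ⟨hyT, ?_⟩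
        by_cases hyz : y = z
        · exact Or.inl hyz
        · exact Or.inr (hzmin y (Finset.mem_filter.2 ⟨hyT, hy2⟩) hyz)
    · intro y hy
      rcases Finset.mem_insert.1 hy with rfl | hy
      · exact Finset.mem_filter.2 ⟨hx, Or.inl rfl⟩
      · obtain ⟨hyT, hy2⟩ := Finset.mem_filter.1 hy
        refine Finset.mem_filter.2 ⟨hyT, Or.inr ?_⟩
        rcases hy2 with rfl | hy2
        · exact hzx
        · exact nodeGt_trans hn hA hy2 hzx
  have hxnot : x ∉ T.filter (fun y => y = z ∨ NodeGt n A y z) := by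
    intro hmem
    rcases (Finset.mem_filter.1 hmem).2 with rfl | h'
    · exact nodeGt_irrefl hn x hzx
    · exact nodeGt_asymm hn hA hzx h'
  unfold Gnode
  rw [← hT, hPeq, Finset.sum_insert hxnot]
  ring

/-- Successor recursion for `Hnode`. -/
lemma hnode_succ (hn : 0 < n) (hA : IsArmSeq n A) {x : ℕ × ℕ} (hx : x ∈ ARset n l i)
    (h : ∃ y ∈ ARset n l i, NodeGt n A x y) :
    ∃ z ∈ ARset n l i, NodeGt n A x z ∧
      Hnode n A l i x = sgnNode l x + Hnode n A l i z := by
  classical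
  set T := ARset n l i with hT
  set U := T.filter (fun y => NodeGt n A x y) with hU
  have hUne : U.Nonempty := by
    obtain ⟨y, hy, hgt⟩ := h
    exact ⟨y, Finset.mem_filter.2 ⟨hy, hgt⟩⟩
  obtain ⟨z, hzU, hzmax⟩ := exists_max_rel (NodeGt n A) (nodeGt_trans hn hA) U hUne
    (fun a ha b hb hne => mem_total hn (Finset.mem_filter.1 ha).1 (Finset.mem_filter.1 hb).1 hne)
  have hzT : z ∈ T := (Finset.mem_filter.1 hzU).1
  have hxz : NodeGt n A x z := (Finset.mem_filter.1 hzU).2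
  refine ⟨z, hzT, hxz, ?_⟩
  have hQeq : T.filter (fun y => y = x ∨ NodeGt n A x y)
      = insert x (T.filter (fun y => y = z ∨ NodeGt n A z y)) := by
    apply Finset.Subset.antisymm
    · intro y hy
      obtain ⟨hyT, hy2⟩ := Finset.mem_filter.1 hy
      rcases hy2 with rfl | hy2
      · exact Finset.mem_insert_self _ _
      · apply Finset.mem_insert_of_mem
        refine Finset.mem_filter.2 ⟨hyT, ?_⟩
        by_cases hyz : y = z
        · exact Or.inl hyz
        · exact Or.inr (hzmax y (Finset.mem_filter.2 ⟨hyT, hy2⟩) hyz)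
    · intro y hy
      rcases Finset.mem_insert.1 hy with rfl | hy
      · exact Finset.mem_filter.2 ⟨hx, Or.inl rfl⟩
      · obtain ⟨hyT, hy2⟩ := Finset.mem_filter.1 hy
        refine Finset.mem_filter.2 ⟨hyT, Or.inr ?_⟩
        rcases hy2 with rfl | hy2
        · exact hxz
        · exact nodeGt_trans hn hA hxz hy2
  have hxnot : x ∉ T.filter (fun y => y = z ∨ NodeGt n A z y) := by
    intro hmem
    rcases (Finset.mem_filter.1 hmem).2 with rfl | h'
    · exact nodeGt_irrefl hn x hxz
    · exact nodeGt_asymm hn hA hxz h'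
  unfold Hnode
  rw [← hT, hQeq, Finset.sum_insert hxnot]

lemma partition_antitone (hl : IsPartition l) : ∀ {a b : ℕ}, a ≤ b → l b ≤ l a := by
  intro a b hab
  induction b with
  | zero => simp_all
  | succ b IH =>
    rcases Nat.lt_or_ge a (b+1) with h | h
    · exact le_trans (hl.1 b) (IH (by omega))
    · have : a = b + 1 := by omega
      subst this; rfl

lemma conj_zero_eq_zero (hl : IsPartition l) : l (conj l 0) = 0 := by
  have hne : {a | l a ≤ 0}.Nonempty := by
    obtain ⟨N, hN⟩ := hl.2
    exact ⟨N, by simp [hN]⟩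
  have := Nat.sInf_mem hne
  simpa [conj] using this

lemma mem_ARset_iff (hl : IsPartition l) {x : ℕ × ℕ} :
    x ∈ ARset n l i ↔ res n x = i ∧ (Addable l x.1 x.2 ∨ Removable l x.1 x.2) := by
  constructor
  · intro h; exact (Finset.mem_filter.1 h).2
  · rintro ⟨hres, har⟩
    refine Finset.mem_filter.2 ⟨?_, hres, har⟩
    rw [Finset.mem_product, Finset.mem_range, Finset.mem_range]
    have hc0 := conj_zero_eq_zero hl
    rcases har with ⟨h1, h2⟩ | ⟨h1, h2⟩
    · constructor
      · by_contra hgt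
        push_neg at hgt
        have hx1 : conj l 0 < x.1 := by omega
        rcases h2 with h2 | h2
        · omega
        · have : l (x.1 - 1) ≤ l (conj l 0) := partition_antitone hl (by omega)
          omega
      · have : l x.1 ≤ l 0 := partition_antitone hl (Nat.zero_le _)
        omega
    · constructor
      · by_contra hgt
        push_neg at hgt
        have : l x.1 ≤ l (conj l 0) := partition_antitone hl (by omega)
        omega
      · have : l x.1 ≤ l 0 := partition_antitone hl (Nat.zero_le _)
        omega

lemma dvd_small (hn2 : 2 ≤ n) {z : ℤ} (hz : (n:ℤ) ∣ z) (h1 : -2 < z) (h2 : z < 2) :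
    z = 0 := by
  obtain ⟨k, rfl⟩ := hz
  have hn' : (2:ℤ) ≤ n := by exact_mod_cast hn2
  rcases lt_trichotomy k 0 with h | h | h
  · nlinarith
  · simp [h]
  · nlinarith

lemma addrem_update (hn2 : 2 ≤ n) (hl : IsPartition l) {a c : ℕ}
    (hrem : Removable l a c) {b d : ℕ} (hne : (b, d) ≠ (a, c))
    (hres : res n ((b : ℕ), (d : ℕ)) = res n (a, c)) :
    (Addable (Function.update l a c) b d ↔ Addable l b d) ∧
    (Removable (Function.update l a c) b d ↔ Removable l b d) := by
  have hn : 0 < n := by omega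
  set m := Function.update l a c with hm
  have hma : m a = c := Function.update_self a c l
  have hmr : ∀ r, r ≠ a → m r = l r := fun r hr => Function.update_of_ne hr c l
  have hdvd : (n:ℤ) ∣ ((a:ℤ) - b + d - c) := res_dvd hn hres
  push_cast at hdvd
  obtain ⟨hla, hla1⟩ := hrem
  by_cases hb : b = a
  · subst hb
    have hdc : d ≠ c := fun h => hne (by simp [h])
    have hfar : d + 2 ≤ c ∨ c + 2 ≤ d := by
      by_contra hcon
      push_neg at hcon
      have : ((d:ℤ) - c) = 0 := by
        apply dvd_small hn2 (by convert hdvd using 1; ring) <;> omega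
      omega
    constructor
    · constructor
      · rintro ⟨h1, _⟩; rw [hma] at h1; omega
      · rintro ⟨h1, _⟩; omega
    · constructor
      · rintro ⟨h1, _⟩; rw [hma] at h1; omega
      · rintro ⟨h1, _⟩; omega
  · by_cases hb1 : b = a + 1
    · subst hb1
      have hdc : d ≠ c := by
        intro h; subst h
        have hd1 : (n:ℤ) ∣ (-1) := by convert hdvd using 1; push_cast; ring
        have : (-1 : ℤ) = 0 := dvd_small hn2 hd1 (by omega) (by omega)
        omega
      have h1 : m (a + 1) = l (a + 1) := hmr _ (by omega)
      have h2 : m (a + 1 + 1) = l (a + 1 + 1) := hmr _ (by omega)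
      constructor
      · unfold Addable
        rw [h1]
        have : a + 1 - 1 = a := by omega
        rw [this, hma, hla]
        constructor <;> rintro ⟨g1, g2⟩ <;> exact ⟨g1, by omega⟩
      · unfold Removable
        rw [h1, h2]
    · by_cases hb2 : a = b + 1
      · have hdc : d ≠ c := by
          intro h; subst h
          have hab : (a:ℤ) = (b:ℤ) + 1 := by exact_mod_cast congrArg (Nat.cast (R := ℤ)) hb2
          have hd1 : (n:ℤ) ∣ (1:ℤ) := by convert hdvd using 1; rw [hab]; ring
          have : (1 : ℤ) = 0 := dvd_small hn2 hd1 (by omega) (by omega)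
          omega
        have h1 : m b = l b := hmr _ (by omega)
        have h2 : m (b + 1) = c := by rw [← hb2, hma]
        have h3 : m (b - 1) = l (b - 1) := hmr _ (by omega)
        constructor
        · unfold Addable
          rw [h1, h3]
        · unfold Removable
          rw [h1, h2, ← hb2, hla]
          constructor <;> rintro ⟨g1, g2⟩ <;> exact ⟨g1, by omega⟩
      · have h1 : m b = l b := hmr _ hb
        have h2 : m (b + 1) = l (b + 1) := hmr _ (by omega)
        have h3 : m (b - 1) = l (b - 1) := hmr _ (by omega)
        constructor
        · unfold Addable; rw [h1, h3]
        · unfold Removable; rw [h1, h2]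

lemma addable_update (hl : IsPartition l) {a c : ℕ} (hrem : Removable l a c) :
    Addable (Function.update l a c) a c := by
  obtain ⟨hla, hla1⟩ := hrem
  refine ⟨Function.update_self a c l, ?_⟩
  rcases Nat.eq_zero_or_pos a with h | h
  · exact Or.inl h
  · right
    rw [Function.update_of_ne (by omega) c l]
    have h2 : l a ≤ l (a - 1) := partition_antitone hl (by omega)
    omega

lemma ARset_update_eq (hn2 : 2 ≤ n) (hl : IsPartition l)
    (hm : IsPartition (Function.update l a c)) (hrem : Removable l a c)
    (hi : i = res n (a, c)) :
    ARset n (Function.update l a c) i = ARset n l i := by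
  ext x
  rw [mem_ARset_iff hm, mem_ARset_iff hl]
  by_cases hx : x = (a, c)
  · subst hx
    simp only [hi]
    constructor
    · rintro ⟨h1, _⟩; exact ⟨h1, Or.inr hrem⟩
    · rintro ⟨h1, _⟩; exact ⟨h1, Or.inl (addable_update hl hrem)⟩
  · constructor
    · rintro ⟨h1, h2⟩
      refine ⟨h1, ?_⟩
      have har := addrem_update (n := n) hn2 hl hrem (b := x.1) (d := x.2)
        (by rwa [← Prod.mk.eta (p := x)] at hx) (by rw [Prod.mk.eta, h1, hi])
      rcases h2 with h2 | h2
      · exact Or.inl (har.1.1 h2)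
      · exact Or.inr (har.2.1 h2)
    · rintro ⟨h1, h2⟩
      refine ⟨h1, ?_⟩
      have har := addrem_update (n := n) hn2 hl hrem (b := x.1) (d := x.2)
        (by rwa [← Prod.mk.eta (p := x)] at hx) (by rw [Prod.mk.eta, h1, hi])
      rcases h2 with h2 | h2
      · exact Or.inl (har.1.2 h2)
      · exact Or.inr (har.2.2 h2)

lemma sgn_update_eq (hn2 : 2 ≤ n) (hl : IsPartition l) {a c : ℕ}
    (hrem : Removable l a c) {y : ℕ × ℕ} (hne : y ≠ (a, c))
    (hres : res n y = res n (a, c)) :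
    sgnNode (Function.update l a c) y = sgnNode l y := by
  have har := addrem_update (n := n) hn2 hl hrem (b := y.1) (d := y.2)
    (by rwa [← Prod.mk.eta (p := y)] at hne) (by rw [Prod.mk.eta]; exact hres)
  unfold sgnNode
  rw [if_congr har.1 rfl rfl, if_congr har.2 rfl rfl]

/-- The good node is removable. -/
lemma sgn_good (hn : 0 < n) (hA : IsArmSeq n A) {x : ℕ × ℕ} (hx : x ∈ ARset n l i)
    (heps : Gnode n A l i x = epsP n A l i) (hpos : 0 < epsP n A l i) :
    sgnNode l x = -1 := by
  rcases sgn_cases hx with h1 | h1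
  · exfalso
    by_cases hex : ∃ y ∈ ARset n l i, NodeGt n A y x
    · obtain ⟨z, hz, hzx, hG⟩ := gnode_pred hn hA hx hex
      have hle : Gnode n A l i z ≤ epsP n A l i := fold_max_le_of_mem hz
      rw [h1] at hG
      omega
    · push_neg at hex
      have := gnode_top hn hx hex
      rw [this, h1] at heps
      omega
  · exact h1

/-- The cogood node is addable. -/
lemma sgn_cogood (hn : 0 < n) (hA : IsArmSeq n A) {x : ℕ × ℕ} (hx : x ∈ ARset n l i)
    (hphi : Hnode n A l i x = phiP n A l i) (hpos : 0 < phiP n A l i) :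
    sgnNode l x = 1 := by
  rcases sgn_cases hx with h1 | h1
  · exact h1
  · exfalso
    by_cases hex : ∃ y ∈ ARset n l i, NodeGt n A x y
    · obtain ⟨z, hz, hxz, hH⟩ := hnode_succ hn hA hx hex
      have hle : Hnode n A l i z ≤ phiP n A l i := fold_max_le_of_mem hz
      rw [h1] at hH
      omega
    · push_neg at hex
      have := hnode_bot hn hx hex
      rw [this, h1] at hphi
      omega

section Update

variable {a c : ℕ}

/-- Comparison of `Hnode` for `l` and `m = update l a c`. -/
lemma hnode_update (hn2 : 2 ≤ n) (hl : IsPartition l)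
    (hm : IsPartition (Function.update l a c)) (hrem : Removable l a c)
    (hi : i = res n (a, c)) (y : ℕ × ℕ) :
    Hnode n A (Function.update l a c) i y = Hnode n A l i y +
      (if ((a, c) = y ∨ NodeGt n A y (a, c)) then 2 else 0) := by
  classical
  have hn : 0 < n := by omega
  have hT : ARset n (Function.update l a c) i = ARset n l i :=
    ARset_update_eq hn2 hl hm hrem hi
  have e1 : sgnNode (Function.update l a c) ((a, c) : ℕ × ℕ) = 1 :=
    sgn_of_addable (addable_update hl hrem)
  have e2 : sgnNode l ((a, c) : ℕ × ℕ) = -1 := sgn_of_removable hrem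
  unfold Hnode
  rw [hT]
  have hcong : ∀ z ∈ (ARset n l i).filter (fun z => z = y ∨ NodeGt n A y z),
      sgnNode (Function.update l a c) z
        = sgnNode l z + (if z = (a, c) then 2 else 0) := by
    intro z hz
    have hzT : z ∈ ARset n l i := (Finset.mem_filter.1 hz).1
    by_cases hza : z = (a, c)
    · rw [hza, if_pos rfl, e1, e2]; norm_num
    · rw [if_neg hza, sgn_update_eq hn2 hl hrem hza
        ((res_of_mem_ARset hzT).trans hi), add_zero]
  rw [Finset.sum_congr rfl hcong, Finset.sum_add_distrib]
  congr 1
  rw [Finset.sum_ite_eq' ((ARset n l i).filter (fun z => z = y ∨ NodeGt n A y z))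
    ((a, c) : ℕ × ℕ) (fun _ => (2:ℤ))]
  have hxT : ((a, c) : ℕ × ℕ) ∈ ARset n l i :=
    (mem_ARset_iff hl).2 ⟨hi.symm, Or.inr hrem⟩
  by_cases hc : ((a, c) : ℕ × ℕ) = y ∨ NodeGt n A y (a, c)
  · rw [if_pos (Finset.mem_filter.2 ⟨hxT, hc⟩), if_pos hc]
  · have hnotmem : ((a, c) : ℕ × ℕ) ∉
        (ARset n l i).filter (fun z => z = y ∨ NodeGt n A y z) := by
      intro hmem
      exact hc (Finset.mem_filter.1 hmem).2
    rw [if_neg hnotmem, if_neg hc]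

/-- Comparison of `Gnode` for `l` and `m = update l a c`. -/
lemma gnode_update (hn2 : 2 ≤ n) (hl : IsPartition l)
    (hm : IsPartition (Function.update l a c)) (hrem : Removable l a c)
    (hi : i = res n (a, c)) (y : ℕ × ℕ) :
    Gnode n A l i y = Gnode n A (Function.update l a c) i y +
      (if ((a, c) = y ∨ NodeGt n A (a, c) y) then 2 else 0) := by
  classical
  have hn : 0 < n := by omega
  have hT : ARset n (Function.update l a c) i = ARset n l i :=
    ARset_update_eq hn2 hl hm hrem hi
  have e1 : sgnNode (Function.update l a c) ((a, c) : ℕ × ℕ) = 1 :=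
    sgn_of_addable (addable_update hl hrem)
  have e2 : sgnNode l ((a, c) : ℕ × ℕ) = -1 := sgn_of_removable hrem
  unfold Gnode
  rw [hT]
  have hcong : ∀ z ∈ (ARset n l i).filter (fun z => z = y ∨ NodeGt n A z y),
      sgnNode l z
        = sgnNode (Function.update l a c) z - (if z = (a, c) then 2 else 0) := by
    intro z hz
    have hzT : z ∈ ARset n l i := (Finset.mem_filter.1 hz).1
    by_cases hza : z = (a, c)
    · rw [hza, if_pos rfl, e1, e2]; norm_num
    · rw [if_neg hza, sgn_update_eq hn2 hl hrem hza
        ((res_of_mem_ARset hzT).trans hi), sub_zero]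
  rw [Finset.sum_congr rfl hcong, Finset.sum_sub_distrib]
  rw [Finset.sum_ite_eq' ((ARset n l i).filter (fun z => z = y ∨ NodeGt n A z y))
    ((a, c) : ℕ × ℕ) (fun _ => (2:ℤ))]
  have hxT : ((a, c) : ℕ × ℕ) ∈ ARset n l i :=
    (mem_ARset_iff hl).2 ⟨hi.symm, Or.inr hrem⟩
  by_cases hc : ((a, c) : ℕ × ℕ) = y ∨ NodeGt n A (a, c) y
  · rw [if_pos (Finset.mem_filter.2 ⟨hxT, hc⟩), if_pos hc]
    ring
  · have hnotmem : ((a, c) : ℕ × ℕ) ∉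
        (ARset n l i).filter (fun z => z = y ∨ NodeGt n A z y) := by
      intro hmem
      exact hc (Finset.mem_filter.1 hmem).2
    rw [if_neg hnotmem, if_neg hc]
    ring

lemma good_to_cogood (hn2 : 2 ≤ n) (hA : IsArmSeq n A) (hl : IsPartition l)
    (hm : IsPartition (Function.update l a c)) (hrem : Removable l a c)
    (hi : i = res n (a, c))
    (heps : Gnode n A l i (a, c) = epsP n A l i)
    (hpos : 0 < epsP n A l i)
    (hstrict : ∀ y ∈ ARset n l i, NodeGt n A y (a, c) →
      Gnode n A l i y ≠ epsP n A l i) :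
    (a, c) ∈ ARset n (Function.update l a c) i ∧
    0 < phiP n A (Function.update l a c) i ∧
    Hnode n A (Function.update l a c) i (a, c) = phiP n A (Function.update l a c) i ∧
    ∀ y ∈ ARset n (Function.update l a c) i, NodeGt n A (a, c) y →
      Hnode n A (Function.update l a c) i y ≠ phiP n A (Function.update l a c) i := by
  classical
  have hn : 0 < n := by omega
  have hT : ARset n (Function.update l a c) i = ARset n l i :=
    ARset_update_eq hn2 hl hm hrem hi
  have hxT : ((a, c) : ℕ × ℕ) ∈ ARset n l i :=
    (mem_ARset_iff hl).2 ⟨hi.symm, Or.inr hrem⟩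
  set ε := epsP n A l i with hεdef
  set S := ∑ y ∈ ARset n l i, sgnNode l y with hSdef
  have hsgnx : sgnNode l (a, c) = -1 := sgn_good hn hA hxT heps hpos
  have hHl : Hnode n A l i (a, c) = S + sgnNode l (a, c) + Gnode n A l i (a, c) :=
    hnode_eq hn hA hxT
  have hHx : Hnode n A (Function.update l a c) i (a, c) = S + ε + 1 := by
    rw [hnode_update hn2 hl hm hrem hi (a, c), if_pos (Or.inl rfl), hHl, hsgnx, heps]
    ring
  have hSeps : 0 ≤ S + ε := by
    obtain ⟨z, hzT, hzmin⟩ := exists_min_rel (NodeGt n A) (nodeGt_trans hn hA)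
      (ARset n l i) ⟨_, hxT⟩ (fun u hu v hv hne => mem_total hn hu hv hne)
    have hnolt : ∀ y ∈ ARset n l i, ¬ NodeGt n A z y := by
      intro y hy hzy
      by_cases h : y = z
      · exact nodeGt_irrefl hn z (h ▸ hzy)
      · exact nodeGt_asymm hn hA (hzmin y hy h) hzy
    have hgb := gnode_bot hn hzT hnolt
    have hle : Gnode n A l i z ≤ ε := fold_max_le_of_mem hzT
    rw [hgb] at hle
    linarith
  have hbound : ∀ y ∈ ARset n l i,
      Hnode n A (Function.update l a c) i y ≤ S + ε + 1 ∧
      (NodeGt n A (a, c) y → Hnode n A (Function.update l a c) i y < S + ε + 1) := by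
    intro y hyT
    have hHly : Hnode n A l i y = S + sgnNode l y + Gnode n A l i y := hnode_eq hn hA hyT
    have hGyle : Gnode n A l i y ≤ ε := fold_max_le_of_mem hyT
    by_cases hyx : y = (a, c)
    · subst hyx
      rw [hHx]
      exact ⟨le_rfl, fun h => absurd h (nodeGt_irrefl hn _)⟩
    rcases mem_total hn hyT hxT hyx with hgt | hlt
    · have hH : Hnode n A (Function.update l a c) i y = Hnode n A l i y + 2 := by
        rw [hnode_update hn2 hl hm hrem hi y, if_pos (Or.inr hgt)]
      have key : sgnNode l y + Gnode n A l i y ≤ ε - 1 := by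
        rcases sgn_cases hyT with h1 | h1
        · by_cases hex : ∃ w ∈ ARset n l i, NodeGt n A w y
          · obtain ⟨z, hzT, hzy, hG⟩ := gnode_pred hn hA hyT hex
            have hzx : NodeGt n A z (a, c) := nodeGt_trans hn hA hzy hgt
            have h2 : Gnode n A l i z ≤ ε := fold_max_le_of_mem hzT
            have h3 : Gnode n A l i z ≠ ε := hstrict z hzT hzx
            rw [h1] at hG
            have h4 : Gnode n A l i z ≤ ε - 1 := by
              rcases lt_or_eq_of_le h2 with h | h
              · linarith
              · exact absurd h h3
            linarith
          · push_neg at hex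
            have hg := gnode_top hn hyT hex
            rw [h1] at hg
            rw [h1, hg]
            linarith
        · linarith
      refine ⟨?_, fun h => absurd hgt (nodeGt_asymm hn hA h)⟩
      rw [hH, hHly]
      linarith
    · have hcond : ¬(((a, c) : ℕ × ℕ) = y ∨ NodeGt n A y (a, c)) := by
        rintro (h | h)
        · exact hyx h.symm
        · exact nodeGt_asymm hn hA hlt h
      have hH : Hnode n A (Function.update l a c) i y = Hnode n A l i y := by
        rw [hnode_update hn2 hl hm hrem hi y, if_neg hcond, add_zero]
      have key : sgnNode l y + Gnode n A l i y ≤ ε := by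
        rcases sgn_cases hyT with h1 | h1
        · obtain ⟨z, hzT, hzy, hG⟩ := gnode_pred hn hA hyT ⟨(a, c), hxT, hlt⟩
          have h2 : Gnode n A l i z ≤ ε := fold_max_le_of_mem hzT
          rw [h1] at hG
          linarith
        · linarith
      have hlt' : Hnode n A (Function.update l a c) i y < S + ε + 1 := by
        rw [hH, hHly]; linarith
      exact ⟨le_of_lt hlt', fun _ => hlt'⟩
  have hphi : phiP n A (Function.update l a c) i = S + ε + 1 := by
    unfold phiP
    rw [hT]
    rw [fold_max_eq_of hxT (by rw [hHx]; linarith)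
      (fun y hy => by rw [hHx]; exact (hbound y hy).1), hHx]
  refine ⟨hT ▸ hxT, by rw [hphi]; linarith, by rw [hHx, hphi], ?_⟩
  intro y hyT' hxy
  rw [hT] at hyT'
  have := (hbound y hyT').2 hxy
  rw [hphi]
  linarith

lemma cogood_to_good (hn2 : 2 ≤ n) (hA : IsArmSeq n A) (hl : IsPartition l)
    (hm : IsPartition (Function.update l a c)) (hrem : Removable l a c)
    (hi : i = res n (a, c))
    (hphi : Hnode n A (Function.update l a c) i (a, c)
      = phiP n A (Function.update l a c) i)
    (hpos : 0 < phiP n A (Function.update l a c) i)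
    (hstrict : ∀ y ∈ ARset n (Function.update l a c) i, NodeGt n A (a, c) y →
      Hnode n A (Function.update l a c) i y ≠ phiP n A (Function.update l a c) i) :
    (a, c) ∈ ARset n l i ∧
    0 < epsP n A l i ∧
    Gnode n A l i (a, c) = epsP n A l i ∧
    ∀ y ∈ ARset n l i, NodeGt n A y (a, c) →
      Gnode n A l i y ≠ epsP n A l i := by
  classical
  have hn : 0 < n := by omega
  have hT : ARset n (Function.update l a c) i = ARset n l i :=
    ARset_update_eq hn2 hl hm hrem hi
  have hxT : ((a, c) : ℕ × ℕ) ∈ ARset n l i :=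
    (mem_ARset_iff hl).2 ⟨hi.symm, Or.inr hrem⟩
  have hxTm : ((a, c) : ℕ × ℕ) ∈ ARset n (Function.update l a c) i := hT ▸ hxT
  set φ := phiP n A (Function.update l a c) i with hφdef
  set S := ∑ y ∈ ARset n (Function.update l a c) i,
    sgnNode (Function.update l a c) y with hSdef
  have hsgnx : sgnNode (Function.update l a c) (a, c) = 1 :=
    sgn_cogood hn hA hxTm hphi hpos
  have hHm : Hnode n A (Function.update l a c) i (a, c)
      = S + sgnNode (Function.update l a c) (a, c)
        + Gnode n A (Function.update l a c) i (a, c) := hnode_eq hn hA hxTm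
  have hGx : Gnode n A l i (a, c) = φ - S + 1 := by
    rw [gnode_update hn2 hl hm hrem hi (a, c), if_pos (Or.inl rfl)]
    rw [hphi, hsgnx] at hHm
    linarith
  have hSφ : S ≤ φ := by
    obtain ⟨z, hzT, hzmax⟩ := exists_max_rel (NodeGt n A) (nodeGt_trans hn hA)
      (ARset n (Function.update l a c) i) ⟨_, hxTm⟩
      (fun u hu v hv hne => mem_total hn hu hv hne)
    have hnogt : ∀ y ∈ ARset n (Function.update l a c) i, ¬ NodeGt n A y z := by
      intro y hy hyz
      by_cases h : y = z
      · exact nodeGt_irrefl hn z (h ▸ hyz)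
      · exact nodeGt_asymm hn hA (hzmax y hy h) hyz
    have hht := hnode_top hn hzT hnogt
    have hle : Hnode n A (Function.update l a c) i z ≤ φ := fold_max_le_of_mem hzT
    rw [hht] at hle
    exact hle
  have hbound : ∀ y ∈ ARset n l i,
      Gnode n A l i y ≤ φ - S + 1 ∧
      (NodeGt n A y (a, c) → Gnode n A l i y < φ - S + 1) := by
    intro y hyT
    have hyTm : y ∈ ARset n (Function.update l a c) i := hT ▸ hyT
    have hHmy : Hnode n A (Function.update l a c) i y
        = S + sgnNode (Function.update l a c) y
          + Gnode n A (Function.update l a c) i y := hnode_eq hn hA hyTm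
    have hHyle : Hnode n A (Function.update l a c) i y ≤ φ := fold_max_le_of_mem hyTm
    by_cases hyx : y = (a, c)
    · subst hyx
      rw [hGx]
      exact ⟨le_rfl, fun h => absurd h (nodeGt_irrefl hn _)⟩
    rcases mem_total hn hyT hxT hyx with hgt | hlt
    · -- y above x
      have hcond : ¬(((a, c) : ℕ × ℕ) = y ∨ NodeGt n A (a, c) y) := by
        rintro (h | h)
        · exact hyx h.symm
        · exact nodeGt_asymm hn hA hgt h
      have hG : Gnode n A l i y = Gnode n A (Function.update l a c) i y := by
        rw [gnode_update hn2 hl hm hrem hi y, if_neg hcond, add_zero]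
      have key : Hnode n A (Function.update l a c) i y
          ≤ φ + sgnNode (Function.update l a c) y := by
        rcases sgn_cases hyTm with h1 | h1
        · rw [h1]; linarith
        · rw [h1]
          obtain ⟨z, hzT, hyz, hH⟩ := hnode_succ hn hA hyTm ⟨(a, c), hxTm, hgt⟩
          have h2 : Hnode n A (Function.update l a c) i z ≤ φ := fold_max_le_of_mem hzT
          rw [h1] at hH
          linarith
      have hlt' : Gnode n A l i y < φ - S + 1 := by
        rw [hG]; linarith
      exact ⟨le_of_lt hlt', fun _ => hlt'⟩
    · -- y below x
      have hG : Gnode n A l i y = Gnode n A (Function.update l a c) i y + 2 := by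
        rw [gnode_update hn2 hl hm hrem hi y, if_pos (Or.inr hlt)]
      have key : Hnode n A (Function.update l a c) i y
          ≤ φ - 1 + sgnNode (Function.update l a c) y := by
        rcases sgn_cases hyTm with h1 | h1
        · rw [h1]; linarith
        · rw [h1]
          by_cases hex : ∃ w ∈ ARset n (Function.update l a c) i, NodeGt n A y w
          · obtain ⟨z, hzT, hyz, hH⟩ := hnode_succ hn hA hyTm hex
            have hxz : NodeGt n A (a, c) z := nodeGt_trans hn hA hlt hyz
            have h2 : Hnode n A (Function.update l a c) i z ≤ φ :=
              fold_max_le_of_mem hzT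
            have h3 : Hnode n A (Function.update l a c) i z ≠ φ := hstrict z hzT hxz
            have h4 : Hnode n A (Function.update l a c) i z ≤ φ - 1 := by
              rcases lt_or_eq_of_le h2 with h | h
              · linarith
              · exact absurd h h3
            rw [h1] at hH
            linarith
          · push_neg at hex
            have hhb := hnode_bot hn hyTm hex
            rw [h1] at hhb
            rw [hhb]
            linarith
      refine ⟨?_, fun h => absurd hlt (nodeGt_asymm hn hA h)⟩
      rw [hG]
      linarith
  have heps : epsP n A l i = φ - S + 1 := by
    unfold epsP
    rw [fold_max_eq_of hxT (by rw [hGx]; linarith)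
      (fun y hy => by rw [hGx]; exact (hbound y hy).1), hGx]
  refine ⟨hxT, by rw [heps]; linarith, by rw [hGx, heps], ?_⟩
  intro y hyT hyx
  have := (hbound y hyT).2 hyx
  rw [heps]
  linarith

end Update

lemma good_unique (hn : 0 < n) {x y : ℕ × ℕ}
    (hx1 : x ∈ ARset n l i) (hx3 : Gnode n A l i x = epsP n A l i)
    (hx4 : ∀ z ∈ ARset n l i, NodeGt n A z x → Gnode n A l i z ≠ epsP n A l i)
    (hy1 : y ∈ ARset n l i) (hy3 : Gnode n A l i y = epsP n A l i)
    (hy4 : ∀ z ∈ ARset n l i, NodeGt n A z y → Gnode n A l i z ≠ epsP n A l i) :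
    x = y := by
  by_contra hne
  rcases mem_total hn hx1 hy1 hne with h | h
  · exact hy4 x hx1 h hx3
  · exact hx4 y hy1 h hy3

lemma cogood_unique (hn : 0 < n) {x y : ℕ × ℕ}
    (hx1 : x ∈ ARset n l i) (hx3 : Hnode n A l i x = phiP n A l i)
    (hx4 : ∀ z ∈ ARset n l i, NodeGt n A x z → Hnode n A l i z ≠ phiP n A l i)
    (hy1 : y ∈ ARset n l i) (hy3 : Hnode n A l i y = phiP n A l i)
    (hy4 : ∀ z ∈ ARset n l i, NodeGt n A y z → Hnode n A l i z ≠ phiP n A l i) :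
    x = y := by
  by_contra hne
  rcases mem_total hn hx1 hy1 hne with h | h
  · exact hx4 y hy1 h hy3
  · exact hy4 x hx1 h hx3

lemma goodNode_eq_some (hn : 0 < n) {x0 : ℕ × ℕ}
    (h1 : x0 ∈ ARset n l i) (h2 : 0 < epsP n A l i)
    (h3 : Gnode n A l i x0 = epsP n A l i)
    (h4 : ∀ y ∈ ARset n l i, NodeGt n A y x0 → Gnode n A l i y ≠ epsP n A l i) :
    goodNode n A l i = some x0 := by
  have hex : ∃ x ∈ ARset n l i, 0 < epsP n A l i ∧ Gnode n A l i x = epsP n A l i ∧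
      ∀ y ∈ ARset n l i, NodeGt n A y x → Gnode n A l i y ≠ epsP n A l i :=
    ⟨x0, h1, h2, h3, h4⟩
  unfold goodNode
  rw [dif_pos hex]
  obtain ⟨g1, _, g3, g4⟩ := hex.choose_spec
  exact congrArg some (good_unique hn g1 g3 g4 h1 h3 h4)

lemma cogoodNode_eq_some (hn : 0 < n) {x0 : ℕ × ℕ}
    (h1 : x0 ∈ ARset n l i) (h2 : 0 < phiP n A l i)
    (h3 : Hnode n A l i x0 = phiP n A l i)
    (h4 : ∀ y ∈ ARset n l i, NodeGt n A x0 y → Hnode n A l i y ≠ phiP n A l i) :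
    cogoodNode n A l i = some x0 := by
  have hex : ∃ x ∈ ARset n l i, 0 < phiP n A l i ∧ Hnode n A l i x = phiP n A l i ∧
      ∀ y ∈ ARset n l i, NodeGt n A x y → Hnode n A l i y ≠ phiP n A l i :=
    ⟨x0, h1, h2, h3, h4⟩
  unfold cogoodNode
  rw [dif_pos hex]
  obtain ⟨g1, _, g3, g4⟩ := hex.choose_spec
  exact congrArg some (cogood_unique hn g1 g3 g4 h1 h3 h4)

lemma goodNode_spec {x0 : ℕ × ℕ} (h : goodNode n A l i = some x0) :
    x0 ∈ ARset n l i ∧ 0 < epsP n A l i ∧ Gnode n A l i x0 = epsP n A l i ∧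
      ∀ y ∈ ARset n l i, NodeGt n A y x0 → Gnode n A l i y ≠ epsP n A l i := by
  unfold goodNode at h
  by_cases hex : ∃ x ∈ ARset n l i, 0 < epsP n A l i ∧ Gnode n A l i x = epsP n A l i ∧
      ∀ y ∈ ARset n l i, NodeGt n A y x → Gnode n A l i y ≠ epsP n A l i
  · rw [dif_pos hex] at h
    have := Option.some.inj h
    rw [← this]
    exact hex.choose_spec
  · rw [dif_neg hex] at h
    exact absurd h (by simp)

lemma cogoodNode_spec {x0 : ℕ × ℕ} (h : cogoodNode n A l i = some x0) :
    x0 ∈ ARset n l i ∧ 0 < phiP n A l i ∧ Hnode n A l i x0 = phiP n A l i ∧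
      ∀ y ∈ ARset n l i, NodeGt n A x0 y → Hnode n A l i y ≠ phiP n A l i := by
  unfold cogoodNode at h
  by_cases hex : ∃ x ∈ ARset n l i, 0 < phiP n A l i ∧ Hnode n A l i x = phiP n A l i ∧
      ∀ y ∈ ARset n l i, NodeGt n A x y → Hnode n A l i y ≠ phiP n A l i
  · rw [dif_pos hex] at h
    have := Option.some.inj h
    rw [← this]
    exact hex.choose_spec
  · rw [dif_neg hex] at h
    exact absurd h (by simp)

end Sums

/-- Lemma 5.2 of the paper: for `A`-regular partitions `λ` and `μ`,
`ẽ_i λ = μ` if and only if `f̃_i μ = λ`. -/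
theorem etilde_eq_iff_ftilde_eq (n : ℕ) (hn : 3 ≤ n)
    (A : ℕ → ℤ) (hA : IsArmSeq n A) (l m : ℕ → ℕ)
    (hl : IsPartition l) (hm : IsPartition m)
    (hlreg : ARegular n A l) (hmreg : ARegular n A m) (i : ZMod n) :
    et n A l i = some m ↔ ft n A m i = some l := by
  have hn0 : 0 < n := by omega
  have hn2 : 2 ≤ n := by omega
  constructor
  · intro h
    unfold et at h
    rw [Option.map_eq_some_iff] at h
    obtain ⟨x0, hgood, hupd⟩ := h
    obtain ⟨hxT, hpos, heps, hstrict⟩ := goodNode_spec hgood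
    have hsgn := sgn_good hn0 hA hxT heps hpos
    have hrem : Removable l x0.1 x0.2 := removable_of_sgn_neg hxT hsgn
    have hla : l x0.1 = x0.2 + 1 := hrem.1
    have hm' : Function.update l x0.1 x0.2 = m := by
      have e : l x0.1 - 1 = x0.2 := by omega
      rw [← hupd, e]
    have hi : i = res n (x0.1, x0.2) := (res_of_mem_ARset hxT).symm
    have hmpart : IsPartition (Function.update l x0.1 x0.2) := by
      rw [hm']; exact hm
    obtain ⟨hc1, hc2, hc3, hc4⟩ :=
      good_to_cogood hn2 hA hl hmpart hrem hi heps hpos hstrict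
    rw [hm'] at hc1 hc2 hc3 hc4
    have hcog : cogoodNode n A m i = some (x0.1, x0.2) :=
      cogoodNode_eq_some hn0 hc1 hc2 hc3 hc4
    have hma : m x0.1 = x0.2 := by rw [← hm', Function.update_self]
    have hfin : Function.update m x0.1 (m x0.1 + 1) = l := by
      funext b
      by_cases hb : b = x0.1
      · subst hb; rw [Function.update_self, hma, ← hla]
      · rw [Function.update_of_ne hb, ← hm', Function.update_of_ne hb]
    unfold ft
    rw [hcog, Option.map_some]
    exact congrArg some hfin
  · intro h
    unfold ft at h
    rw [Option.map_eq_some_iff] at h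
    obtain ⟨x0, hcog, hupd⟩ := h
    obtain ⟨hxTm, hpos, hphi, hstrict⟩ := cogoodNode_spec hcog
    have hsgn := sgn_cogood hn0 hA hxTm hphi hpos
    have hadd : Addable m x0.1 x0.2 := addable_of_sgn_one hxTm hsgn
    have hma : m x0.1 = x0.2 := hadd.1
    have hl' : Function.update m x0.1 (x0.2 + 1) = l := by
      rw [← hupd, hma]
    have hrem : Removable l x0.1 x0.2 := by
      constructor
      · rw [← hl', Function.update_self]
      · rw [← hl', Function.update_of_ne (by omega : x0.1 + 1 ≠ x0.1)]
        have h1 := hm.1 x0.1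
        omega
    have hmeq : m = Function.update l x0.1 x0.2 := by
      funext b
      by_cases hb : b = x0.1
      · subst hb; rw [Function.update_self, hma]
      · rw [Function.update_of_ne hb, ← hl', Function.update_of_ne hb]
    have hi : i = res n (x0.1, x0.2) := (res_of_mem_ARset hxTm).symm
    have hmpart : IsPartition (Function.update l x0.1 x0.2) := by
      rw [← hmeq]; exact hm
    rw [hmeq] at hxTm hphi hstrict hpos
    obtain ⟨hg1, hg2, hg3, hg4⟩ :=
      cogood_to_good hn2 hA hl hmpart hrem hi hphi hpos hstrict
    have hgood : goodNode n A l i = some (x0.1, x0.2) :=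
      goodNode_eq_some hn0 hg1 hg2 hg3 hg4
    have hfin : Function.update l x0.1 (l x0.1 - 1) = m := by
      have e : l x0.1 - 1 = x0.2 := by have := hrem.1; omega
      rw [e, hmeq]
    unfold et
    rw [hgood, Option.map_some]
    exact congrArg some hfin

end ArmCrystal
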